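/- Let P be a digraph with boundary ∂P, and let 𝒮_{P\∂P} be the set of SCCs of P disjoint from ∂P. Suppose G ⊇ P is a digraph whose paths entering/leaving V(P)\∂P pass through ∂P. Then the number of SCCs of G contained in V(P)\∂P equals |𝒮_{P\∂P}| minus the number of S ∈ 𝒮_{P\∂P} for which there exists an SCC S' of G with S ⊊ S' (equivalently, with S' ∩ ∂P ≠ ∅ and S ⊆ Π_P(S' ∩ ∂P)). Moreover, each such S is contained in exactly one SCC of G. -/

import Mathlib

open Relation

private lemma scc_eq16 {V : Type*} {E : V → V → Prop} {r w : V}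
    (h1 : ReflTransGen E r w) (h2 : ReflTransGen E w r) :
    {x | ReflTransGen E r x ∧ ReflTransGen E x r}
      = {x | ReflTransGen E w x ∧ ReflTransGen E x w} := by
  ext x
  constructor
  · rintro ⟨a, b⟩; exact ⟨h2.trans a, b.trans h1⟩
  · rintro ⟨a, b⟩; exact ⟨h1.trans a, b.trans h2⟩

/-- Counting SCCs of `G` contained in `VP \ bP`: it equals the
number of SCCs of the piece `P` avoiding the boundary, minus the number of such
SCCs that are properly contained in some SCC of `G`; moreover each boundary-free
SCC of `P` is contained in exactly one SCC of `G`. -/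
theorem stmt16 {V : Type*} [Fintype V] (E EP : V → V → Prop) (VP bP : Set V)
    (hbP : bP ⊆ VP)
    (hEP : ∀ u v, EP u v → E u v ∧ u ∈ VP ∧ v ∈ VP)
    (hclosed : ∀ u v, E u v → (u ∈ VP \ bP ∨ v ∈ VP \ bP) → EP u v) :
    ({S : Set V |
        (∃ r, S = {w | Relation.ReflTransGen E r w ∧ Relation.ReflTransGen E w r}) ∧
        S ⊆ VP \ bP}.ncard
      = {S : Set V |
          (∃ r ∈ VP, S = {w | Relation.ReflTransGen EP r w ∧ Relation.ReflTransGen EP w r}) ∧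
          S ∩ bP = ∅}.ncard
        - {S : Set V |
            ((∃ r ∈ VP, S = {w | Relation.ReflTransGen EP r w ∧ Relation.ReflTransGen EP w r}) ∧
             S ∩ bP = ∅) ∧
            ∃ S' : Set V,
              (∃ r, S' = {w | Relation.ReflTransGen E r w ∧ Relation.ReflTransGen E w r}) ∧
              S ⊂ S'}.ncard) ∧
    (∀ S : Set V,
      ((∃ r ∈ VP, S = {w | Relation.ReflTransGen EP r w ∧ Relation.ReflTransGen EP w r}) ∧
       S ∩ bP = ∅) →
      ∃! S' : Set V,
        (∃ r, S' = {w | Relation.ReflTransGen E r w ∧ Relation.ReflTransGen E w r}) ∧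
        S ⊆ S') := by
  have hmono : ∀ a b, ReflTransGen EP a b → ReflTransGen E a b := by
    intro a b h
    exact ReflTransGen.mono (fun u v huv => (hEP u v huv).1) a b h
  -- EP-SCCs avoiding bP are contained in VP \ bP
  have hBsub : ∀ (r : V), r ∈ VP →
      ({w | ReflTransGen EP r w ∧ ReflTransGen EP w r} : Set V) ∩ bP = ∅ →
      ({w | ReflTransGen EP r w ∧ ReflTransGen EP w r} : Set V) ⊆ VP \ bP := by
    intro r hr hdisj x hx
    have hxVP : x ∈ VP := by
      rcases hx with ⟨h1, -⟩
      induction h1 with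
      | refl => exact hr
      | tail _ he ih => exact (hEP _ _ he).2.2
    refine ⟨hxVP, fun hxb => ?_⟩
    exact absurd (Set.mem_inter hx hxb) (by simp [hdisj])
  -- key lemma: within an E-SCC contained in VP \ bP, paths are EP-paths
  have key : ∀ r : V, (∀ x, ReflTransGen E r x → ReflTransGen E x r → x ∈ VP \ bP) →
      ∀ a b, ReflTransGen E a b → ReflTransGen E b r → ReflTransGen E r a →
        ReflTransGen EP a b := by
    intro r hr a b hab
    induction hab with
    | refl => intro _ _; exact .refl
    | @tail b c hab' hbc ih =>
        intro hcr hra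
        have hbr : ReflTransGen E b r := (ReflTransGen.single hbc).trans hcr
        have h1 := ih hbr hra
        have hbmem := hr b (hra.trans hab') hbr
        exact h1.tail (hclosed _ _ hbc (Or.inl hbmem))
  -- the main set identity
  have hAeq :
      {S : Set V |
        (∃ r, S = {w | ReflTransGen E r w ∧ ReflTransGen E w r}) ∧ S ⊆ VP \ bP}
      = {S : Set V |
          (∃ r ∈ VP, S = {w | ReflTransGen EP r w ∧ ReflTransGen EP w r}) ∧ S ∩ bP = ∅}
        \ {S : Set V |
            ((∃ r ∈ VP, S = {w | ReflTransGen EP r w ∧ ReflTransGen EP w r}) ∧ S ∩ bP = ∅) ∧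
            ∃ S' : Set V,
              (∃ r, S' = {w | ReflTransGen E r w ∧ ReflTransGen E w r}) ∧ S ⊂ S'} := by
    ext S
    constructor
    · rintro ⟨⟨r, rfl⟩, hsub⟩
      have hr : ∀ x, ReflTransGen E r x → ReflTransGen E x r → x ∈ VP \ bP := by
        intro x h1 h2; exact hsub ⟨h1, h2⟩
      have hrmem : r ∈ VP \ bP := hr r .refl .refl
      have hEPeq : ({w | ReflTransGen E r w ∧ ReflTransGen E w r} : Set V)
          = {w | ReflTransGen EP r w ∧ ReflTransGen EP w r} := by
        ext w
        constructor
        · rintro ⟨h1, h2⟩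
          exact ⟨key r hr r w h1 h2 .refl, key r hr w r h2 .refl h1⟩
        · rintro ⟨h1, h2⟩
          exact ⟨hmono _ _ h1, hmono _ _ h2⟩
      have hB : (∃ r' ∈ VP, ({w | ReflTransGen E r w ∧ ReflTransGen E w r} : Set V)
            = {w | ReflTransGen EP r' w ∧ ReflTransGen EP w r'})
          ∧ ({w | ReflTransGen E r w ∧ ReflTransGen E w r} : Set V) ∩ bP = ∅ := by
        refine ⟨⟨r, hrmem.1, hEPeq⟩, ?_⟩
        ext x
        simp only [Set.mem_inter_iff, Set.mem_empty_iff_false, iff_false, not_and]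
        intro hx hxb
        exact (hsub hx).2 hxb
      refine ⟨hB, ?_⟩
      rintro ⟨-, S', ⟨r', rfl⟩, hss⟩
      have hrS' : r ∈ {w | ReflTransGen E r' w ∧ ReflTransGen E w r'} :=
        hss.1 ⟨.refl, .refl⟩
      have : ({w | ReflTransGen E r' w ∧ ReflTransGen E w r'} : Set V)
          = {w | ReflTransGen E r w ∧ ReflTransGen E w r} := scc_eq16 hrS'.1 hrS'.2
      rw [this] at hss
      exact hss.2 (le_refl _)
    · rintro ⟨⟨⟨r, hrVP, rfl⟩, hdisj⟩, hnot⟩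
      have hsub := hBsub r hrVP hdisj
      have hsubE : ({w | ReflTransGen EP r w ∧ ReflTransGen EP w r} : Set V)
          ⊆ {w | ReflTransGen E r w ∧ ReflTransGen E w r} := by
        rintro x ⟨h1, h2⟩; exact ⟨hmono _ _ h1, hmono _ _ h2⟩
      have heq : ({w | ReflTransGen EP r w ∧ ReflTransGen EP w r} : Set V)
          = {w | ReflTransGen E r w ∧ ReflTransGen E w r} := by
        by_contra hne
        exact hnot ⟨⟨⟨r, hrVP, rfl⟩, hdisj⟩,
          ⟨{w | ReflTransGen E r w ∧ ReflTransGen E w r}, ⟨r, rfl⟩,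
            ssubset_of_subset_of_ne hsubE hne⟩⟩
      exact ⟨⟨r, heq⟩, hsub⟩
  constructor
  · rw [hAeq]
    exact Set.ncard_diff (fun S hS => hS.1) (Set.toFinite _)
  · rintro S ⟨⟨r, hrVP, rfl⟩, hdisj⟩
    refine ⟨{w | ReflTransGen E r w ∧ ReflTransGen E w r}, ⟨⟨r, rfl⟩, ?_⟩, ?_⟩
    · rintro x ⟨h1, h2⟩; exact ⟨hmono _ _ h1, hmono _ _ h2⟩
    · rintro S' ⟨⟨r', rfl⟩, hsub⟩
      have hrS' : r ∈ {w | ReflTransGen E r' w ∧ ReflTransGen E w r'} :=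
        hsub ⟨.refl, .refl⟩
      exact scc_eq16 hrS'.1 hrS'.2
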